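/- Let d ≥ 1 and let A ⊆ Z^d be finite of rank d. Then the iterated reduction process terminates: there exists a finite A* ⊆ Z^d of rank d with |A*| = |A| and |A* + q·A*| = |A + q·A| for every integer q, such that for every a ∈ A*, the set A* - a generates Z^d as a group. -/

import Mathlib

open Pointwise

/-- The dilate `q · A = {q • a : a ∈ A}`. -/
def dil {d : ℕ} (q : ℤ) (A : Finset (Fin d → ℤ)) : Finset (Fin d → ℤ) :=
  A.image (fun a => q • a)

/-- The rank of a finite `A ⊆ ℤ^d`: the smallest dimension of an affine
subspace containing `A`. -/
noncomputable def rk {d : ℕ} (A : Finset (Fin d → ℤ)) : ℕ :=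
  Module.finrank ℚ
    (vectorSpan ℚ ((fun v : Fin d → ℤ => fun i : Fin d => (v i : ℚ)) '' (A : Set (Fin d → ℤ))))

/-- `A` is reduced: for every `a ∈ A`, the differences `A - a` generate `ℤ^d`. -/
def Reduced {d : ℕ} (A : Finset (Fin d → ℤ)) : Prop :=
  ∀ a ∈ A, AddSubgroup.closure ((fun x => x - a) '' (A : Set (Fin d → ℤ))) = ⊤

theorem reduction_terminates {d : ℕ} (hd : 1 ≤ d)
    (A : Finset (Fin d → ℤ)) (hrk : rk A = d) :
    ∃ Astar : Finset (Fin d → ℤ), rk Astar = d ∧ Astar.card = A.card ∧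
      (∀ q : ℤ, (Astar + dil q Astar).card = (A + dil q A).card) ∧
      Reduced Astar := by
  classical
  set ι : (Fin d → ℤ) → (Fin d → ℚ) := fun v i => (v i : ℚ) with hιdef
  have hι_sub : ∀ x y : Fin d → ℤ, ι (x - y) = ι x - ι y := by
    intro x y; funext i; simp [hιdef]
  have hι_add : ∀ x y : Fin d → ℤ, ι (x + y) = ι x + ι y := by
    intro x y; funext i; simp [hιdef]
  have hι_zero : ι 0 = 0 := by funext i; simp [hιdef]
  have hι_neg : ∀ x : Fin d → ℤ, ι (-x) = - ι x := by
    intro x; funext i; simp [hιdef]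
  have hι_smul : ∀ (c : ℤ) (x : Fin d → ℤ), ι (c • x) = (c : ℚ) • ι x := by
    intro c x; funext i; simp [hιdef]
  have hfr : Module.finrank ℚ (Fin d → ℚ) = d := by
    simp [Module.finrank_pi]
  -- A is nonempty
  have hA : A.Nonempty := by
    by_contra h
    rw [Finset.not_nonempty_iff_eq_empty] at h
    rw [h] at hrk
    have : rk (∅ : Finset (Fin d → ℤ)) = 0 := by
      unfold rk
      rw [Finset.coe_empty, Set.image_empty, vectorSpan_empty, finrank_bot]
    rw [this] at hrk
    omega
  obtain ⟨a, ha⟩ := hA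
  set S : Set (Fin d → ℤ) := (fun x => x - a) '' (A : Set (Fin d → ℤ)) with hSdef
  set N : Submodule ℤ (Fin d → ℤ) := Submodule.span ℤ S with hNdef
  have hmemN : ∀ x ∈ A, x - a ∈ N := fun x hx =>
    Submodule.subset_span ⟨x, hx, rfl⟩
  -- the rational span of ι '' S is everything
  have hspanS : Submodule.span ℚ (ι '' S) = ⊤ := by
    have hva : vectorSpan ℚ (ι '' (A : Set (Fin d → ℤ)))
        = Submodule.span ℚ (ι '' S) := by
      have ha' : a ∈ (A : Set (Fin d → ℤ)) := ha
      rw [vectorSpan_eq_span_vsub_set_right ℚ (Set.mem_image_of_mem ι ha')]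
      congr 1
      rw [hSdef, ← Set.image_comp, ← Set.image_comp]
      apply Set.image_congr
      intro x _
      simp only [Function.comp_apply, vsub_eq_sub]
      rw [hι_sub]
    apply Submodule.eq_top_of_finrank_eq
    rw [← hva]
    rw [hfr]
    exact hrk
  -- get a basis of N
  obtain ⟨n, b⟩ := Submodule.basisOfPid (Pi.basisFun ℤ (Fin d)) N
  -- n ≤ d
  have hnd : n ≤ d := by
    have h1 : LinearIndependent ℤ (fun i => ((b i : Fin d → ℤ))) :=
      b.linearIndependent.map' N.subtype (Submodule.ker_subtype N)
    have := h1.fintype_card_le_finrank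
    simpa [Module.finrank_pi] using this
  -- d ≤ n
  have hdn : d ≤ n := by
    set bv : Fin n → (Fin d → ℤ) := fun i => ((b i : Fin d → ℤ)) with hbv
    have hNspan : Submodule.span ℤ (Set.range bv) = N := by
      have := b.span_eq
      calc Submodule.span ℤ (Set.range bv)
          = Submodule.map N.subtype (Submodule.span ℤ (Set.range b)) := by
            rw [Submodule.map_span]; congr 1
            rw [← Set.range_comp]; rfl
        _ = N := by rw [this, Submodule.map_subtype_top]
    have key : ∀ x ∈ N, ι x ∈ Submodule.span ℚ (Set.range (fun i => ι (bv i))) := by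
      intro x hx
      rw [← hNspan] at hx
      induction hx using Submodule.span_induction with
      | mem y hy =>
          obtain ⟨i, rfl⟩ := hy
          exact Submodule.subset_span ⟨i, rfl⟩
      | zero => rw [hι_zero]; exact Submodule.zero_mem _
      | add y z _ _ hy hz => rw [hι_add]; exact Submodule.add_mem _ hy hz
      | smul c y _ hy => rw [hι_smul]; exact Submodule.smul_mem _ _ hy
    have htop : Submodule.span ℚ (Set.range (fun i => ι (bv i))) = ⊤ := by
      rw [eq_top_iff, ← hspanS]
      rw [Submodule.span_le]
      rintro _ ⟨x, hx, rfl⟩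
      exact key x (Submodule.subset_span hx)
    have h2 : Module.finrank ℚ (Fin d → ℚ)
        ≤ Fintype.card (Fin n) := by
      classical
      have h3 := finrank_span_le_card (R := ℚ) (Set.range (fun i => ι (bv i)))
      rw [htop] at h3
      rw [finrank_top] at h3
      refine h3.trans ?_
      rw [Set.toFinset_range]
      exact Finset.card_image_le.trans (le_of_eq (Finset.card_univ))
    simpa [hfr] using h2
  have hn : n = d := le_antisymm hnd hdn
  set c : Module.Basis (Fin d) ℤ N := b.reindex (finCongr hn) with hcdef
  clear_value c
  clear hcdef
  -- the partial inverse map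
  set φ : (Fin d → ℤ) → (Fin d → ℤ) :=
    fun x => if h : x ∈ N then c.equivFun ⟨x, h⟩ else 0 with hφdef
  have hφ_eq : ∀ (x : Fin d → ℤ) (h : x ∈ N), φ x = c.equivFun ⟨x, h⟩ := by
    intro x h; simp [hφdef, h]
  have hφ0 : φ 0 = 0 := by
    rw [hφ_eq 0 (Submodule.zero_mem N)]
    have : (⟨0, Submodule.zero_mem N⟩ : N) = 0 := rfl
    rw [this, map_zero]
  have hφadd : ∀ x y, x ∈ N → y ∈ N → φ (x + y) = φ x + φ y := by
    intro x y hx hy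
    rw [hφ_eq x hx, hφ_eq y hy, hφ_eq (x + y) (Submodule.add_mem N hx hy)]
    have : (⟨x + y, Submodule.add_mem N hx hy⟩ : N) = ⟨x, hx⟩ + ⟨y, hy⟩ := rfl
    rw [this, map_add]
  have hφsmul : ∀ (c : ℤ) x, x ∈ N → φ (c • x) = c • φ x := by
    intro c x hx
    rw [hφ_eq x hx, hφ_eq (c • x) (Submodule.smul_mem N c hx)]
    have : (⟨c • x, Submodule.smul_mem N c hx⟩ : N) = c • ⟨x, hx⟩ := rfl
    rw [this, map_smul]
  have hφinj : ∀ x y, x ∈ N → y ∈ N → φ x = φ y → x = y := by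
    intro x y hx hy h
    rw [hφ_eq x hx, hφ_eq y hy] at h
    have := c.equivFun.injective h
    exact congrArg Subtype.val this
  set Astar : Finset (Fin d → ℤ) := A.image (fun x => φ (x - a)) with hAstar
  have h0mem : (0 : Fin d → ℤ) ∈ Astar := by
    rw [hAstar, Finset.mem_image]
    exact ⟨a, ha, by rw [sub_self, hφ0]⟩
  -- closure of Astar is everything
  have hcl : AddSubgroup.closure (Astar : Set (Fin d → ℤ)) = ⊤ := by
    rw [AddSubgroup.eq_top_iff']
    intro v
    have key : ∀ x ∈ N, φ x ∈ AddSubgroup.closure (Astar : Set (Fin d → ℤ)) := by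
      intro x hx
      rw [hNdef] at hx
      induction hx using Submodule.span_induction with
      | mem y hy =>
          obtain ⟨t, ht, rfl⟩ := hy
          exact AddSubgroup.subset_closure
            (by rw [hAstar]; exact Finset.mem_coe.2 (Finset.mem_image.2 ⟨t, ht, rfl⟩))
      | zero => rw [hφ0]; exact AddSubgroup.zero_mem _
      | add y z hy' hz' hy hz =>
          rw [hφadd y z hy' hz']; exact AddSubgroup.add_mem _ hy hz
      | smul c y hy' hy =>
          rw [hφsmul c y hy']; exact AddSubgroup.zsmul_mem _ hy c
    have hw := key ((c.equivFun.symm v : N) : Fin d → ℤ) (c.equivFun.symm v).2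
    have : φ ((c.equivFun.symm v : N) : Fin d → ℤ) = v := by
      rw [hφ_eq _ (c.equivFun.symm v).2]
      have h2 : (⟨((c.equivFun.symm v : N) : Fin d → ℤ), (c.equivFun.symm v).2⟩ : N)
          = c.equivFun.symm v := rfl
      rw [h2, LinearEquiv.apply_symm_apply]
    rwa [this] at hw
  -- rational span of ι '' Astar is everything
  have hspanstar : Submodule.span ℚ (ι '' (Astar : Set (Fin d → ℤ))) = ⊤ := by
    have h1 : ∀ x : Fin d → ℤ, ι x ∈ Submodule.span ℚ (ι '' (Astar : Set (Fin d → ℤ))) := by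
      intro x
      have hx : x ∈ AddSubgroup.closure (Astar : Set (Fin d → ℤ)) := by
        rw [hcl]; trivial
      induction hx using AddSubgroup.closure_induction with
      | mem y hy => exact Submodule.subset_span (Set.mem_image_of_mem ι hy)
      | zero => rw [hι_zero]; exact Submodule.zero_mem _
      | add y z _ _ hy hz => rw [hι_add]; exact Submodule.add_mem _ hy hz
      | neg y _ hy => rw [hι_neg]; exact Submodule.neg_mem _ hy
    rw [eq_top_iff, ← (Pi.basisFun ℚ (Fin d)).span_eq, Submodule.span_le]
    rintro _ ⟨i, rfl⟩
    have := h1 (Pi.single i 1)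
    have heq : ι (Pi.single i 1) = Pi.basisFun ℚ (Fin d) i := by
      funext j
      simp [hιdef, Pi.single_apply, Pi.basisFun_apply]
    rwa [heq] at this
  refine ⟨Astar, ?_, ?_, ?_, ?_⟩
  · -- rank
    show Module.finrank ℚ (vectorSpan ℚ (ι '' (Astar : Set (Fin d → ℤ)))) = d
    have h0 : ι 0 ∈ ι '' (Astar : Set (Fin d → ℤ)) :=
      Set.mem_image_of_mem ι h0mem
    rw [vectorSpan_eq_span_vsub_set_right ℚ h0]
    have himg : (· -ᵥ ι 0) '' (ι '' (Astar : Set (Fin d → ℤ)))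
        = ι '' (Astar : Set (Fin d → ℤ)) := by
      rw [hι_zero]
      convert Set.image_id _ using 2
      funext x
      simp
    rw [himg, hspanstar, finrank_top, hfr]
  · -- cardinality
    rw [hAstar]
    apply Finset.card_image_of_injOn
    intro x hx y hy h
    exact sub_left_inj.mp (hφinj (x - a) (y - a) (hmemN x hx) (hmemN y hy) h)
  · -- sumset cardinalities
    intro q
    have hrepr : ∀ z ∈ A + dil q A, ∃ x ∈ A, ∃ y ∈ A, x + q • y = z := by
      intro z hz
      rw [Finset.mem_add] at hz
      obtain ⟨x, hx, w, hw, rfl⟩ := hz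
      rw [dil, Finset.mem_image] at hw
      obtain ⟨y, hy, rfl⟩ := hw
      exact ⟨x, hx, y, hy, rfl⟩
    have hzmem : ∀ z ∈ A + dil q A, z - (1 + q) • a ∈ N := by
      intro z hz
      obtain ⟨x, hx, y, hy, rfl⟩ := hrepr z hz
      have heq : x + q • y - (1 + q) • a = (x - a) + q • (y - a) := by
        rw [add_smul, one_smul, smul_sub]
        abel
      rw [heq]
      exact Submodule.add_mem N (hmemN x hx) (Submodule.smul_mem N q (hmemN y hy))
    have hset : Astar + dil q Astar
        = (A + dil q A).image (fun z => φ (z - (1 + q) • a)) := by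
      ext v
      constructor
      · intro hv
        rw [Finset.mem_add] at hv
        obtain ⟨u, hu, w, hw, rfl⟩ := hv
        rw [dil, Finset.mem_image] at hw
        obtain ⟨u', hu', rfl⟩ := hw
        rw [hAstar, Finset.mem_image] at hu hu'
        obtain ⟨x, hx, rfl⟩ := hu
        obtain ⟨y, hy, rfl⟩ := hu'
        rw [Finset.mem_image]
        refine ⟨x + q • y, ?_, ?_⟩
        · rw [Finset.mem_add]
          exact ⟨x, hx, q • y, by rw [dil, Finset.mem_image]; exact ⟨y, hy, rfl⟩, rfl⟩
        · have heq : x + q • y - (1 + q) • a = (x - a) + q • (y - a) := by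
            rw [add_smul, one_smul, smul_sub]
            abel
          rw [heq, hφadd _ _ (hmemN x hx) (Submodule.smul_mem N q (hmemN y hy)),
            hφsmul q _ (hmemN y hy)]
      · intro hv
        rw [Finset.mem_image] at hv
        obtain ⟨z, hz, rfl⟩ := hv
        obtain ⟨x, hx, y, hy, rfl⟩ := hrepr z hz
        have heq : x + q • y - (1 + q) • a = (x - a) + q • (y - a) := by
          rw [add_smul, one_smul, smul_sub]
          abel
        rw [heq, hφadd _ _ (hmemN x hx) (Submodule.smul_mem N q (hmemN y hy)),
          hφsmul q _ (hmemN y hy)]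
        rw [Finset.mem_add]
        refine ⟨φ (x - a), ?_, q • φ (y - a), ?_, rfl⟩
        · rw [hAstar, Finset.mem_image]; exact ⟨x, hx, rfl⟩
        · rw [dil, Finset.mem_image]
          exact ⟨φ (y - a), by rw [hAstar, Finset.mem_image]; exact ⟨y, hy, rfl⟩, rfl⟩
    rw [hset]
    apply Finset.card_image_of_injOn
    intro z hz z' hz' h
    exact sub_left_inj.mp (hφinj _ _ (hzmem z hz) (hzmem z' hz') h)
  · -- Reduced
    intro c hc
    rw [eq_top_iff, ← hcl]
    apply (AddSubgroup.closure_le _).2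
    intro t ht
    have h1 : t - c ∈ AddSubgroup.closure ((fun x => x - c) '' (Astar : Set (Fin d → ℤ))) :=
      AddSubgroup.subset_closure ⟨t, ht, rfl⟩
    have h2 : (0 : Fin d → ℤ) - c
        ∈ AddSubgroup.closure ((fun x => x - c) '' (Astar : Set (Fin d → ℤ))) :=
      AddSubgroup.subset_closure ⟨0, h0mem, rfl⟩
    have := AddSubgroup.sub_mem _ h1 h2
    simpa using this
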